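/- Suppose W is doubly stochastic, each J_i(·,θ_m) is μ-strongly convex and L-Lipschitz smooth, each q_i^{(t)} is a probability vector in ℝ^M, q̃ is a fixed probability vector in ℝ^M, and the stepsize satisfies 0 < α^{(t)} < 1/(2L). Then the iterates satisfy |x̄^{(t+1)} − x*(q̃)| ≤ √(1 − α^{(t)}μ(1 − 2Lα^{(t)})) · |x̄^{(t)} − x*(q̃)| + ((α^{(t)})^{1/2} L/√(μN)) · ‖x^{(t)} − 1·x̄^{(t)}‖ + (√2·L·α^{(t)}/√N) · ‖x^{(t)} − 1·x̄^{(t)}‖ + α^{(t)} · (1/N)·∑_{i=1}^{N} ‖q_i^{(t)} − q̃‖ · ‖∇_x 𝐉_i(x*(q̃),θ)‖. -/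

import Mathlib

lemma my_sqrt_add_le (a b : ℝ) : Real.sqrt (a + b) ≤ Real.sqrt a + Real.sqrt b := by
  rcases le_or_gt (a + b) 0 with h | h
  · rw [Real.sqrt_eq_zero_of_nonpos h]
    positivity
  · have h1 : Real.sqrt a = Real.sqrt (max a 0) := by
      rcases le_or_gt 0 a with h' | h'
      · rw [max_eq_left h']
      · rw [Real.sqrt_eq_zero_of_nonpos h'.le, max_eq_right h'.le, Real.sqrt_zero]
    have h2 : Real.sqrt b = Real.sqrt (max b 0) := by
      rcases le_or_gt 0 b with h' | h'
      · rw [max_eq_left h']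
      · rw [Real.sqrt_eq_zero_of_nonpos h'.le, max_eq_right h'.le, Real.sqrt_zero]
    rw [h1, h2]
    have h3 : a + b ≤ max a 0 + max b 0 := add_le_add (le_max_left _ _) (le_max_left _ _)
    calc Real.sqrt (a + b) ≤ Real.sqrt (max a 0 + max b 0) := Real.sqrt_le_sqrt h3
      _ ≤ Real.sqrt (max a 0) + Real.sqrt (max b 0) := by
          nlinarith [Real.sqrt_nonneg (max a 0), Real.sqrt_nonneg (max b 0),
            Real.sq_sqrt (le_max_right a 0), Real.sq_sqrt (le_max_right b 0),
            Real.sqrt_nonneg (max a 0 + max b 0),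
            Real.sq_sqrt (by positivity : (0:ℝ) ≤ max a 0 + max b 0),
            mul_nonneg (Real.sqrt_nonneg (max a 0)) (Real.sqrt_nonneg (max b 0))]

lemma my_abs_le_sqrt_of_sq_le {v c : ℝ} (h : v ^ 2 ≤ c) : |v| ≤ Real.sqrt c := by
  have := Real.sqrt_le_sqrt h
  rwa [Real.sqrt_sq_eq_abs] at this

/-- quadratic contraction step -/
lemma my_quad (μ L a D G ε : ℝ) (hμ : 0 < μ) (ha0 : 0 < a)
    (h2La : 2 * L * a < 1) (hL : 0 < L)
    (hGD : G * D ≥ μ * D ^ 2)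
    (hG2 : G ^ 2 ≤ L * (G * D)) :
    (D - a * (G + ε)) ^ 2 ≤ (1 - a * μ * (1 - 2 * L * a)) * D ^ 2
      + (a / μ + 2 * a ^ 2) * ε ^ 2 := by
  have hcross : 0 ≤ a * μ * D ^ 2 + a / μ * ε ^ 2 + 2 * a * ε * D := by
    have heq : a * μ * D ^ 2 + a / μ * ε ^ 2 + 2 * a * ε * D
        = (a / μ) * (ε + μ * D) ^ 2 := by
      field_simp
      ring
    rw [heq]
    positivity
  have h1aL : 0 < 1 - a * L := by nlinarith
  have hP1 : 0 ≤ 2 * a * (1 - a * L) * (G * D - μ * D ^ 2) := by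
    apply mul_nonneg
    · positivity
    · linarith
  have hP2 : 0 ≤ a ^ 2 * (L * (G * D) - G ^ 2) := by
    apply mul_nonneg (sq_nonneg a); linarith
  have hP3 : 0 ≤ a ^ 2 * (G - ε) ^ 2 := by positivity
  nlinarith [hP1, hP2, hP3, hcross]

/-- full contraction step with square roots -/
lemma my_contract (μ L a D G ε : ℝ) (hμ : 0 < μ) (hL : 0 < L) (ha0 : 0 < a)
    (h2La : 2 * L * a < 1) (hμL : μ ≤ L)
    (hGD : G * D ≥ μ * D ^ 2)
    (hG2 : G ^ 2 ≤ L * (G * D)) :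
    |D - a * (G + ε)| ≤ Real.sqrt (1 - a * μ * (1 - 2 * L * a)) * |D|
      + (Real.sqrt a / Real.sqrt μ + Real.sqrt 2 * a) * |ε| := by
  have hC0 : 0 ≤ 1 - a * μ * (1 - 2 * L * a) := by
    nlinarith [mul_le_mul_of_nonneg_left hμL ha0.le]
  have hquad := my_quad μ L a D G ε hμ ha0 h2La hL hGD hG2
  have hK : Real.sqrt (a / μ + 2 * a ^ 2)
      ≤ Real.sqrt a / Real.sqrt μ + Real.sqrt 2 * a := by
    have h1 : Real.sqrt (a / μ + 2 * a ^ 2)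
        ≤ Real.sqrt (a / μ) + Real.sqrt (2 * a ^ 2) := my_sqrt_add_le _ _
    have h2 : Real.sqrt (a / μ) = Real.sqrt a / Real.sqrt μ := Real.sqrt_div ha0.le μ
    have h3 : Real.sqrt (2 * a ^ 2) = Real.sqrt 2 * a := by
      rw [Real.sqrt_mul (by norm_num : (0:ℝ) ≤ 2), Real.sqrt_sq ha0.le]
    rw [h2, h3] at h1
    exact h1
  have h1 := my_abs_le_sqrt_of_sq_le hquad
  have h2 := my_sqrt_add_le ((1 - a * μ * (1 - 2 * L * a)) * D ^ 2)
    ((a / μ + 2 * a ^ 2) * ε ^ 2)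
  have h3 : Real.sqrt ((1 - a * μ * (1 - 2 * L * a)) * D ^ 2)
      = Real.sqrt (1 - a * μ * (1 - 2 * L * a)) * |D| := by
    rw [Real.sqrt_mul hC0, Real.sqrt_sq_eq_abs]
  have hK0 : (0:ℝ) ≤ a / μ + 2 * a ^ 2 := by positivity
  have h4 : Real.sqrt ((a / μ + 2 * a ^ 2) * ε ^ 2)
      = Real.sqrt (a / μ + 2 * a ^ 2) * |ε| := by
    rw [Real.sqrt_mul hK0, Real.sqrt_sq_eq_abs]
  have h5 : Real.sqrt (a / μ + 2 * a ^ 2) * |ε|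
      ≤ (Real.sqrt a / Real.sqrt μ + Real.sqrt 2 * a) * |ε| :=
    mul_le_mul_of_nonneg_right hK (abs_nonneg ε)
  rw [h3, h4] at h2
  linarith

/-- weighted average bound -/
lemma my_avg_bound {M : ℕ} (p g : Fin M → ℝ) (c : ℝ)
    (hp0 : ∀ m, 0 ≤ p m) (hp1 : ∑ m, p m = 1) (hg : ∀ m, |g m| ≤ c) :
    |∑ m, p m * g m| ≤ c := by
  calc |∑ m, p m * g m| ≤ ∑ m, |p m * g m| := Finset.abs_sum_le_sum_abs _ _
    _ ≤ ∑ m, p m * c := by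
        refine Finset.sum_le_sum fun m _ => ?_
        rw [abs_mul, abs_of_nonneg (hp0 m)]
        exact mul_le_mul_of_nonneg_left (hg m) (hp0 m)
    _ = c := by rw [← Finset.sum_mul, hp1, one_mul]

/-- Cauchy–Schwarz with abs -/
lemma my_abs_cs {M : ℕ} (f g : Fin M → ℝ) :
    |∑ m, f m * g m| ≤ Real.sqrt (∑ m, f m ^ 2) * Real.sqrt (∑ m, g m ^ 2) := by
  rw [abs_le]
  constructor
  · have h := Real.sum_mul_le_sqrt_mul_sqrt Finset.univ (fun m => -(f m)) g
    simp only [neg_mul, Finset.sum_neg_distrib, neg_sq] at h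
    linarith
  · exact Real.sum_mul_le_sqrt_mul_sqrt Finset.univ _ _

/-- ℓ¹–ℓ² bound -/
lemma my_l1_l2 {N : ℕ} (y : Fin N → ℝ) :
    ∑ i, |y i| ≤ Real.sqrt N * Real.sqrt (∑ i, (y i) ^ 2) := by
  have h := Real.sum_mul_le_sqrt_mul_sqrt Finset.univ
    (fun _ : Fin N => (1:ℝ)) (fun i => |y i|)
  simp only [one_mul, one_pow, sq_abs, Finset.sum_const, Finset.card_univ,
    Fintype.card_fin, nsmul_eq_mul, mul_one] at h
  exact h

/-- vanishing averaged gradient at the minimizer -/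
lemma my_deriv_zero {N M : ℕ} (J : Fin N → ℝ → Fin M → ℝ) (qt : Fin M → ℝ) (xstar : ℝ)
    (hdiff : ∀ (i : Fin N) (m : Fin M), Differentiable ℝ (fun z => J i z m))
    (hmin : ∀ z, (∑ i, ∑ m, qt m * J i xstar m) ≤ ∑ i, ∑ m, qt m * J i z m) :
    ∑ i, ∑ m, qt m * deriv (fun z => J i z m) xstar = 0 := by
  have hΦ : HasDerivAt (fun z => ∑ i, ∑ m, qt m * J i z m)
      (∑ i, ∑ m, qt m * deriv (fun z => J i z m) xstar) xstar := by
    apply HasDerivAt.fun_sum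
    intro i _
    apply HasDerivAt.fun_sum
    intro m _
    exact ((hdiff i m).differentiableAt.hasDerivAt).const_mul (qt m)
  have hloc : IsLocalMin (fun z => ∑ i, ∑ m, qt m * J i z m) xstar :=
    Filter.Eventually.of_forall hmin
  have h0 := hloc.deriv_eq_zero
  rwa [hΦ.deriv] at h0
set_option maxHeartbeats 1000000 in
/-- One-step recursion for the optimization error `|x̄^{(t+1)} − x*(q̃)|`
of the distributed gradient descent step with belief-averaged costs. -/
theorem stmt8 (N M : ℕ) (hN : 0 < N) (hM : 0 < M)
    (W : Matrix (Fin N) (Fin N) ℝ)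
    (hWnonneg : ∀ i j, 0 ≤ W i j)
    (hWrow : ∀ i, ∑ j, W i j = 1)
    (hWcol : ∀ j, ∑ i, W i j = 1)
    (J : Fin N → ℝ → Fin M → ℝ) (μ L : ℝ) (hμ : 0 < μ) (hL : 0 < L)
    (hdiff : ∀ (i : Fin N) (m : Fin M), Differentiable ℝ (fun z => J i z m))
    (hsc : ∀ (i : Fin N) (m : Fin M) (x x' : ℝ),
      (deriv (fun z => J i z m) x' - deriv (fun z => J i z m) x) * (x' - x) ≥
        μ * (x' - x) ^ 2)
    (hlip : ∀ (i : Fin N) (m : Fin M) (x x' : ℝ),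
      |deriv (fun z => J i z m) x' - deriv (fun z => J i z m) x| ≤ L * |x' - x|)
    (α : ℕ → ℝ) (hα : ∀ t, 0 < α t ∧ α t < 1 / (2 * L))
    (q : ℕ → Fin N → Fin M → ℝ)                        -- beliefs (probability vectors)
    (hqprob : ∀ t i, (∀ m, 0 ≤ q t i m) ∧ (∑ m, q t i m = 1))
    (qt : Fin M → ℝ)                                   -- the fixed probability vector q̃
    (hqtprob : (∀ m, 0 ≤ qt m) ∧ (∑ m, qt m = 1))
    (x : ℕ → Fin N → ℝ)                                -- decisions
    (hx : ∀ t i, x (t + 1) i =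
      ∑ j, W i j * (x t j - α t * ∑ m, q t j m * deriv (fun z => J j z m) (x t j)))
    (xstar : ℝ)                                        -- x*(q̃)
    (hxstar : ∀ z : ℝ, (1 / (N : ℝ)) * ∑ i, ∑ m, qt m * J i xstar m ≤
      (1 / (N : ℝ)) * ∑ i, ∑ m, qt m * J i z m) :
    ∀ t : ℕ,
      |(1 / (N : ℝ)) * (∑ i, x (t + 1) i) - xstar| ≤
        Real.sqrt (1 - α t * μ * (1 - 2 * L * α t)) *
          |(1 / (N : ℝ)) * (∑ i, x t i) - xstar| +
        (Real.sqrt (α t) * L / Real.sqrt (μ * N)) *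
          Real.sqrt (∑ i, (x t i - (1 / (N : ℝ)) * ∑ k, x t k) ^ 2) +
        (Real.sqrt 2 * L * α t / Real.sqrt N) *
          Real.sqrt (∑ i, (x t i - (1 / (N : ℝ)) * ∑ k, x t k) ^ 2) +
        α t * ((1 / (N : ℝ)) * ∑ i,
          Real.sqrt (∑ m, (q t i m - qt m) ^ 2) *
            Real.sqrt (∑ m, (deriv (fun z => J i z m) xstar) ^ 2)) := by
  intro t
  obtain ⟨ha0, haL⟩ := hα t
  set a : ℝ := α t with ha_def
  have hNpos : (0:ℝ) < N := by exact_mod_cast hN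
  have h1N : (0:ℝ) < 1 / N := by positivity
  -- μ ≤ L
  have hμL : μ ≤ L := by
    have i0 : Fin N := ⟨0, hN⟩
    have m0 : Fin M := ⟨0, hM⟩
    have h1 := hsc i0 m0 0 1
    have h2 := hlip i0 m0 0 1
    simp only [sub_zero, one_pow, mul_one, abs_one] at h1 h2
    have := le_abs_self (deriv (fun z => J i0 z m0) 1 - deriv (fun z => J i0 z m0) 0)
    linarith
  have h2La : 2 * L * a < 1 := by
    have := (lt_div_iff₀ (by positivity : (0:ℝ) < 2 * L)).mp haL
    linarith
  -- average dynamics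
  have hsum1 : ∑ i, x (t + 1) i
      = ∑ j, (x t j - a * ∑ m, q t j m * deriv (fun z => J j z m) (x t j)) := by
    simp only [hx]
    rw [Finset.sum_comm]
    refine Finset.sum_congr rfl fun j _ => ?_
    rw [← Finset.sum_mul, hWcol j, one_mul]
  set xb : ℝ := (1 / (N : ℝ)) * ∑ i, x t i with hxb_def
  set dev : ℝ := Real.sqrt (∑ i, (x t i - xb) ^ 2) with hdev_def
  set gb : ℝ := (1 / (N : ℝ)) * ∑ j, ∑ m, q t j m * deriv (fun z => J j z m) (x t j)
    with hgb_def
  set Hb : ℝ := (1 / (N : ℝ)) * ∑ i, ∑ m, q t i m * deriv (fun z => J i z m) xb with hHb_def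
  set Hs : ℝ := (1 / (N : ℝ)) * ∑ i, ∑ m, q t i m * deriv (fun z => J i z m) xstar
    with hHs_def
  set Q : ℝ := (1 / (N : ℝ)) * ∑ i,
      Real.sqrt (∑ m, (q t i m - qt m) ^ 2) *
        Real.sqrt (∑ m, (deriv (fun z => J i z m) xstar) ^ 2) with hQ_def
  set G : ℝ := Hb - Hs with hG_def
  set ε : ℝ := gb - Hb with hε_def
  set D : ℝ := xb - xstar with hD_def
  clear_value D ε G Q Hs Hb gb dev xb a
  -- x̄(t+1) = x̄(t) - a * gb
  have hxb' : (1 / (N : ℝ)) * ∑ i, x (t + 1) i = xb - a * gb := by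
    rw [hsum1, Finset.sum_sub_distrib, ← Finset.mul_sum, hxb_def, hgb_def]
    ring
  -- the q̃-averaged gradient vanishes at xstar
  have hderiv0 : ∑ i, ∑ m, qt m * deriv (fun z => J i z m) xstar = 0 :=
    my_deriv_zero J qt xstar hdiff (fun z => (mul_le_mul_iff_right₀ h1N).mp (hxstar z))
  -- Hs is the belief-mismatch term, bounded by Q
  have hHsB : Hs = (1 / (N : ℝ)) *
      ∑ i, ∑ m, (q t i m - qt m) * deriv (fun z => J i z m) xstar := by
    rw [hHs_def]
    congr 1
    have h : ∑ i, ∑ m, (q t i m - qt m) * deriv (fun z => J i z m) xstar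
        = (∑ i, ∑ m, q t i m * deriv (fun z => J i z m) xstar)
          - ∑ i, ∑ m, qt m * deriv (fun z => J i z m) xstar := by
      rw [← Finset.sum_sub_distrib]
      refine Finset.sum_congr rfl fun i _ => ?_
      rw [← Finset.sum_sub_distrib]
      refine Finset.sum_congr rfl fun m _ => ?_
      ring
    rw [h, hderiv0, sub_zero]
  have hHsQ : |Hs| ≤ Q := by
    rw [hHsB, hQ_def, abs_mul, abs_of_pos h1N]
    refine mul_le_mul_of_nonneg_left ?_ h1N.le
    refine (Finset.abs_sum_le_sum_abs _ _).trans (Finset.sum_le_sum fun i _ => ?_)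
    exact my_abs_cs (fun m => q t i m - qt m) (fun m => deriv (fun z => J i z m) xstar)
  -- strong monotonicity: G * D ≥ μ * D^2
  have e1 : G * D = (1 / (N : ℝ)) * ∑ i, ∑ m, q t i m *
      ((deriv (fun z => J i z m) xb - deriv (fun z => J i z m) xstar) * (xb - xstar)) := by
    rw [hG_def, hHb_def, hHs_def, hD_def]
    rw [← mul_sub, ← Finset.sum_sub_distrib, mul_assoc]
    congr 1
    rw [Finset.sum_mul]
    refine Finset.sum_congr rfl fun i _ => ?_
    rw [← Finset.sum_sub_distrib, Finset.sum_mul]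
    refine Finset.sum_congr rfl fun m _ => ?_
    ring
  have e2 : (1 / (N : ℝ)) * ∑ i, (∑ m, q t i m * (μ * (xb - xstar) ^ 2))
      = μ * (xb - xstar) ^ 2 := by
    have h : ∀ i : Fin N, ∑ m, q t i m * (μ * (xb - xstar) ^ 2) = μ * (xb - xstar) ^ 2 :=
      fun i => by rw [← Finset.sum_mul, (hqprob t i).2, one_mul]
    simp only [h, Finset.sum_const, Finset.card_univ, Fintype.card_fin, nsmul_eq_mul]
    field_simp
  have hGD : G * D ≥ μ * D ^ 2 := by
    rw [e1, hD_def, ← e2]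
    refine mul_le_mul_of_nonneg_left ?_ h1N.le
    refine Finset.sum_le_sum fun i _ => Finset.sum_le_sum fun m _ => ?_
    exact mul_le_mul_of_nonneg_left (hsc i m xstar xb) ((hqprob t i).1 m)
  -- Lipschitz: |G| ≤ L * |D|
  have e3 : G = (1 / (N : ℝ)) * ∑ i, ∑ m, q t i m *
      (deriv (fun z => J i z m) xb - deriv (fun z => J i z m) xstar) := by
    rw [hG_def, hHb_def, hHs_def, ← mul_sub, ← Finset.sum_sub_distrib]
    congr 1
    refine Finset.sum_congr rfl fun i _ => ?_
    rw [← Finset.sum_sub_distrib]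
    refine Finset.sum_congr rfl fun m _ => ?_
    ring
  have habsG : |G| ≤ L * |D| := by
    rw [e3, abs_mul, abs_of_pos h1N, hD_def]
    have hb : ∑ i, |∑ m, q t i m *
        (deriv (fun z => J i z m) xb - deriv (fun z => J i z m) xstar)|
        ≤ ∑ i : Fin N, L * |xb - xstar| := by
      refine Finset.sum_le_sum fun i _ => ?_
      refine my_avg_bound (q t i) _ _ ((hqprob t i).1) ((hqprob t i).2) fun m => ?_
      exact hlip i m xstar xb
    have hs : ∑ i : Fin N, L * |xb - xstar| = N * (L * |xb - xstar|) := by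
      rw [Finset.sum_const, Finset.card_univ, Fintype.card_fin, nsmul_eq_mul]
    calc (1 / (N:ℝ)) * |∑ i, ∑ m, q t i m *
          (deriv (fun z => J i z m) xb - deriv (fun z => J i z m) xstar)|
        ≤ (1 / (N:ℝ)) * (N * (L * |xb - xstar|)) := by
          refine mul_le_mul_of_nonneg_left ?_ h1N.le
          rw [hs] at hb
          exact (Finset.abs_sum_le_sum_abs _ _).trans hb
      _ = L * |xb - xstar| := by field_simp
  have hGD0 : 0 ≤ G * D := le_trans (by positivity) hGD
  have hG2 : G ^ 2 ≤ L * (G * D) := by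
    have h1 : |G| * |G| ≤ (L * |D|) * |G| :=
      mul_le_mul_of_nonneg_right habsG (abs_nonneg G)
    have h2 : G ^ 2 ≤ L * (|D| * |G|) := by
      nlinarith [sq_abs G, h1]
    have h3 : |D| * |G| = |G * D| := by rw [abs_mul]; ring
    rw [h3, abs_of_nonneg hGD0] at h2
    exact h2
  -- consensus error bound: |ε| ≤ L / √N * dev
  have e4 : ε = (1 / (N : ℝ)) * ∑ i, ∑ m, q t i m *
      (deriv (fun z => J i z m) (x t i) - deriv (fun z => J i z m) xb) := by
    rw [hε_def, hgb_def, hHb_def, ← mul_sub, ← Finset.sum_sub_distrib]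
    congr 1
    refine Finset.sum_congr rfl fun i _ => ?_
    rw [← Finset.sum_sub_distrib]
    refine Finset.sum_congr rfl fun m _ => ?_
    ring
  have hNs : Real.sqrt N * Real.sqrt N = (N : ℝ) := Real.mul_self_sqrt hNpos.le
  have hNspos : 0 < Real.sqrt N := Real.sqrt_pos.mpr hNpos
  have hεbound : |ε| ≤ L / Real.sqrt N * dev := by
    have hb : ∑ i, |∑ m, q t i m *
        (deriv (fun z => J i z m) (x t i) - deriv (fun z => J i z m) xb)|
        ≤ ∑ i, L * |x t i - xb| := by
      refine Finset.sum_le_sum fun i _ => ?_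
      refine my_avg_bound (q t i) _ _ ((hqprob t i).1) ((hqprob t i).2) fun m => ?_
      exact hlip i m xb (x t i)
    have hl2 : ∑ i, L * |x t i - xb| ≤ L * (Real.sqrt N * dev) := by
      rw [← Finset.mul_sum, hdev_def]
      exact mul_le_mul_of_nonneg_left (my_l1_l2 _) hL.le
    calc |ε| ≤ (1 / (N:ℝ)) * ∑ i, |∑ m, q t i m *
          (deriv (fun z => J i z m) (x t i) - deriv (fun z => J i z m) xb)| := by
          rw [e4, abs_mul, abs_of_pos h1N]
          exact mul_le_mul_of_nonneg_left (Finset.abs_sum_le_sum_abs _ _) h1N.le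
      _ ≤ (1 / (N:ℝ)) * (L * (Real.sqrt N * dev)) :=
          mul_le_mul_of_nonneg_left (hb.trans hl2) h1N.le
      _ = ((1 / (N:ℝ)) * Real.sqrt N) * (L * dev) := by ring
      _ = L / Real.sqrt N * dev := by
          have h1s : (1 / (N:ℝ)) * Real.sqrt N = 1 / Real.sqrt N := by
            field_simp
            exact Real.sq_sqrt hNpos.le
          rw [h1s]
          ring
  -- contraction step
  have hA := my_contract μ L a D G ε hμ hL ha0 h2La hμL hGD hG2
  -- final assembly
  have hdecomp : (1 / (N : ℝ)) * ∑ i, x (t + 1) i - xstar = (D - a * (G + ε)) - a * Hs := by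
    rw [hxb', hD_def, hG_def, hε_def]
    ring
  have htri : |(1 / (N : ℝ)) * ∑ i, x (t + 1) i - xstar|
      ≤ |D - a * (G + ε)| + a * |Hs| := by
    rw [hdecomp]
    calc |(D - a * (G + ε)) - a * Hs| ≤ |D - a * (G + ε)| + |a * Hs| := abs_sub _ _
      _ = |D - a * (G + ε)| + a * |Hs| := by rw [abs_mul, abs_of_pos ha0]
  have hc1 : (0:ℝ) ≤ Real.sqrt a / Real.sqrt μ + Real.sqrt 2 * a := by positivity
  have hεfin : (Real.sqrt a / Real.sqrt μ + Real.sqrt 2 * a) * |ε|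
      ≤ (Real.sqrt a / Real.sqrt μ + Real.sqrt 2 * a) * (L / Real.sqrt N * dev) :=
    mul_le_mul_of_nonneg_left hεbound hc1
  have hBfin : a * |Hs| ≤ a * Q := mul_le_mul_of_nonneg_left hHsQ ha0.le
  have hsplit : (Real.sqrt a / Real.sqrt μ + Real.sqrt 2 * a) * (L / Real.sqrt N * dev)
      = (Real.sqrt a * L / (Real.sqrt μ * Real.sqrt N)) * dev
        + (Real.sqrt 2 * L * a / Real.sqrt N) * dev := by
    ring
  rw [Real.sqrt_mul hμ.le]
  calc |(1 / (N : ℝ)) * ∑ i, x (t + 1) i - xstar|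
      ≤ |D - a * (G + ε)| + a * |Hs| := htri
    _ ≤ Real.sqrt (1 - a * μ * (1 - 2 * L * a)) * |D|
          + (Real.sqrt a / Real.sqrt μ + Real.sqrt 2 * a) * |ε| + a * Q := by
        linarith
    _ ≤ Real.sqrt (1 - a * μ * (1 - 2 * L * a)) * |D|
          + ((Real.sqrt a * L / (Real.sqrt μ * Real.sqrt N)) * dev
            + (Real.sqrt 2 * L * a / Real.sqrt N) * dev) + a * Q := by
        rw [← hsplit]
        linarith
    _ = _ := by
        rw [hD_def]
        ring
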